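/- There does not exist a family of 2^n + 1 subsets S_1, ..., S_{2^n+1} of the non-identity n-qubit Pauli matrices, each of size 2^n − 1 with I + ∑_{P∈S_t} P positive semidefinite, such that the S_t exactly partition all 4^n − 1 non-identity Pauli matrices, for all sufficiently large n. -/

import Mathlib

open Matrix
open scoped ComplexOrder

/-- The single-qubit Pauli matrices I, X, Y, Z. -/
noncomputable def pauli : Fin 4 → Matrix (Fin 2) (Fin 2) ℂ :=
  ![(1 : Matrix (Fin 2) (Fin 2) ℂ), !![0, 1; 1, 0],
    !![0, -Complex.I; Complex.I, 0], !![1, 0; 0, -1]]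

/-- The `n`-qubit Pauli matrix indexed by `a : Fin n → Fin 4`. -/
noncomputable def PauliString (n : ℕ) (a : Fin n → Fin 4) :
    Matrix (Fin n → Fin 2) (Fin n → Fin 2) ℂ :=
  Matrix.of fun i j => ∏ k, pauli (a k) (i k) (j k)

private lemma prod_sum_swap {n : ℕ} {α : Type*} [Fintype α] (g : Fin n → α → ℂ) :
    ∑ x : Fin n → α, ∏ k, g k (x k) = ∏ k, ∑ y : α, g k y :=
  (Fintype.prod_sum g).symm

private lemma pauliString_zero (n : ℕ) : PauliString n (fun _ => 0) = 1 := by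
  ext i j
  show (∏ k, pauli 0 (i k) (j k)) = (1 : Matrix (Fin n → Fin 2) (Fin n → Fin 2) ℂ) i j
  by_cases h : i = j
  · subst h
    simp [pauli, Matrix.one_apply_eq]
  · obtain ⟨k, hk⟩ := Function.ne_iff.mp h
    rw [Matrix.one_apply_ne h, Finset.prod_eq_zero (Finset.mem_univ k)]
    simp [pauli, Matrix.one_apply_ne hk]

set_option maxHeartbeats 1000000 in
private lemma tensor_qform {n : ℕ} (Q : Matrix (Fin 2) (Fin 2) ℂ) (u : Fin n → Fin 2 → ℂ) :
    star (fun i : Fin n → Fin 2 => ∏ k, u k (i k)) ⬝ᵥ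
      ((Matrix.of fun i j : Fin n → Fin 2 => ∏ k, Q (i k) (j k)) *ᵥ
        fun j : Fin n → Fin 2 => ∏ k, u k (j k))
    = ∏ k, star (u k) ⬝ᵥ (Q *ᵥ u k) := by
  simp only [dotProduct, mulVec, Matrix.of_apply, Pi.star_apply]
  calc ∑ i : Fin n → Fin 2, star (∏ k, u k (i k)) *
        ∑ j : Fin n → Fin 2, (∏ k, Q (i k) (j k)) * ∏ k, u k (j k)
      = ∑ i : Fin n → Fin 2, ∏ k, (star (u k (i k)) * ∑ y, Q (i k) y * u k y) := by
        refine Finset.sum_congr rfl fun i _ => ?_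
        rw [star_prod]
        have h1 : ∑ j : Fin n → Fin 2, (∏ k, Q (i k) (j k)) * ∏ k, u k (j k)
            = ∏ k, ∑ y, Q (i k) y * u k y := by
          rw [← prod_sum_swap (fun k y => Q (i k) y * u k y)]
          exact Finset.sum_congr rfl fun j _ => (Finset.prod_mul_distrib).symm
        rw [h1, ← Finset.prod_mul_distrib]
    _ = ∏ k, ∑ x, star (u k x) * ∑ y, Q x y * u k y := by
        rw [prod_sum_swap (fun k x => star (u k x) * ∑ y, Q x y * u k y)]

private lemma tensor_dot {n : ℕ} (u : Fin n → Fin 2 → ℂ) :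
    star (fun i : Fin n → Fin 2 => ∏ k, u k (i k)) ⬝ᵥ (fun i : Fin n → Fin 2 => ∏ k, u k (i k))
    = ∏ k, star (u k) ⬝ᵥ u k := by
  simp only [dotProduct, Pi.star_apply]
  rw [← prod_sum_swap (fun k x => star (u k x) * u k x)]
  exact Finset.sum_congr rfl fun i _ => by rw [star_prod, ← Finset.prod_mul_distrib]

private lemma qform_sum {ι I : Type*} [Fintype I] (s : Finset ι)
    (A : ι → Matrix I I ℂ) (v : I → ℂ) :
    star v ⬝ᵥ ((∑ t ∈ s, A t) *ᵥ v) = ∑ t ∈ s, star v ⬝ᵥ ((A t) *ᵥ v) := by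
  classical
  induction s using Finset.induction with
  | empty => simp
  | insert _ _ h ih => simp [Finset.sum_insert h, Matrix.add_mulVec, dotProduct_add, ih]

private lemma sqrt3_lb : (1.73 : ℝ) < Real.sqrt 3 := by
  have h2 : Real.sqrt 3 ^ 2 = 3 := Real.sq_sqrt (by norm_num)
  nlinarith [Real.sqrt_nonneg 3]

private lemma sqrt3_ub : Real.sqrt 3 < (1.74 : ℝ) := by
  have h2 : Real.sqrt 3 ^ 2 = 3 := Real.sq_sqrt (by norm_num)
  nlinarith [Real.sqrt_nonneg 3]

private lemma key_ineq (m : ℕ) :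
    (12 + 4 * Real.sqrt 3) * (12 - 4 * Real.sqrt 3) ^ (4 + m)
      < (4 * Real.sqrt 3) ^ (5 + m) := by
  set s : ℝ := Real.sqrt 3 with hs
  have hs2 : s ^ 2 = 3 := Real.sq_sqrt (by norm_num)
  have hlb : (1.73 : ℝ) < s := sqrt3_lb
  have hub : s < (1.74 : ℝ) := sqrt3_ub
  induction m with
  | zero =>
      have hbase : (12 + 4 * s) * (12 - 4 * s) ^ 4 = 331776 - 184320 * s := by
        linear_combination (1024 * s ^ 3 - 9216 * s ^ 2 + 21504 * s + 27648) * hs2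
      have hpow : (4 * s) ^ 5 = 9216 * s := by
        linear_combination (1024 * s ^ 3 + 3072 * s) * hs2
      rw [show 4 + 0 = 4 from rfl, show 5 + 0 = 5 from rfl, hbase, hpow]
      nlinarith
  | succ m ih =>
      have h1 : (0 : ℝ) < 12 - 4 * s := by nlinarith
      have h2 : 12 - 4 * s ≤ 4 * s := by nlinarith
      have h3 : (0 : ℝ) < (4 * s) ^ (5 + m) := by positivity
      calc (12 + 4 * s) * (12 - 4 * s) ^ (4 + (m + 1))
          = (12 - 4 * s) * ((12 + 4 * s) * (12 - 4 * s) ^ (4 + m)) := by ring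
        _ < (12 - 4 * s) * (4 * s) ^ (5 + m) := by
            exact mul_lt_mul_of_pos_left ih h1
        _ ≤ (4 * s) * (4 * s) ^ (5 + m) := by
            exact mul_le_mul_of_nonneg_right h2 (le_of_lt h3)
        _ = (4 * s) ^ (5 + (m + 1)) := by ring

/-- For all sufficiently large `n`, there is no family of `2^n + 1` sets of
non-identity `n`-qubit Pauli matrices, each of size `2^n − 1` with
`I + ∑_{P∈S_t} P` positive semidefinite, exactly partitioning all `4^n − 1`
non-identity Pauli matrices. -/
theorem no_exact_pauli_partition :
    ∃ N : ℕ, ∀ n ≥ N,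
      ¬ ∃ S : Fin (2 ^ n + 1) → Finset (Fin n → Fin 4),
          (∀ t, (S t).card = 2 ^ n - 1) ∧
          (∀ t, (fun _ => (0 : Fin 4)) ∉ S t) ∧
          (∀ t, ((1 : Matrix (Fin n → Fin 2) (Fin n → Fin 2) ℂ)
              + ∑ a ∈ S t, PauliString n a).PosSemidef) ∧
          (∀ a : Fin n → Fin 4, a ≠ (fun _ => 0) → ∃! t, a ∈ S t) := by
  classical
  refine ⟨5, fun n hn => ?_⟩
  rintro ⟨S, hcard, h0, hpsd, huniq⟩
  haveI : NeZero n := ⟨by omega⟩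
  set s : ℝ := Real.sqrt 3 with hs_def
  have hs2C : ((s : ℂ)) ^ 2 = 3 := by
    rw [← Complex.ofReal_pow, Real.sq_sqrt (by norm_num : (3:ℝ) ≥ 0)]
    norm_num
  -- the single-qubit sum of Paulis
  have hQ : (∑ c : Fin 4, pauli c) = !![2, 1 - Complex.I; 1 + Complex.I, 0] := by
    ext i j
    rw [Matrix.sum_apply]
    fin_cases i <;> fin_cases j <;>
      simp [pauli, Fin.sum_univ_four] <;> ring
  -- eigenvectors
  set wm : Fin 2 → ℂ := ![1 - Complex.I, -(1 + (s : ℂ))] with hwm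
  set wp : Fin 2 → ℂ := ![1 - Complex.I, (s : ℂ) - 1] with hwp
  set u : Fin n → Fin 2 → ℂ := fun k => if k = 0 then wm else wp with hu
  set v : (Fin n → Fin 2) → ℂ := fun i => ∏ k, u k (i k) with hv
  -- per-qubit values
  have hdm : star wm ⬝ᵥ wm = ((6 + 2 * s : ℝ) : ℂ) := by
    simp [hwm, dotProduct, Fin.sum_univ_two, Complex.conj_ofReal, map_sub, map_add,
      Complex.conj_I]
    -- push_cast (unneeded)
    linear_combination hs2C - Complex.I_sq
  have hdp : star wp ⬝ᵥ wp = ((6 - 2 * s : ℝ) : ℂ) := by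
    simp [hwp, dotProduct, Fin.sum_univ_two, Complex.conj_ofReal, map_sub, map_add,
      Complex.conj_I]
    -- push_cast (unneeded)
    linear_combination hs2C - Complex.I_sq
  have hqm : star wm ⬝ᵥ ((∑ c : Fin 4, pauli c) *ᵥ wm) = ((-(4 * s) : ℝ) : ℂ) := by
    rw [hQ]
    simp [hwm, dotProduct, mulVec, Fin.sum_univ_two, Complex.conj_ofReal, map_sub, map_add,
      Complex.conj_I]
    -- push_cast (unneeded)
    linear_combination (2*(s:ℂ)) * Complex.I_sq
  have hqp : star wp ⬝ᵥ ((∑ c : Fin 4, pauli c) *ᵥ wp) = ((4 * s : ℝ) : ℂ) := by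
    rw [hQ]
    simp [hwp, dotProduct, mulVec, Fin.sum_univ_two, Complex.conj_ofReal, map_sub, map_add,
      Complex.conj_I]
    -- push_cast (unneeded)
    linear_combination (-2*(s:ℂ)) * Complex.I_sq
  -- the big sum of shifted Pauli sums is PSD on v
  have hge : (0 : ℂ) ≤ star v ⬝ᵥ
      ((∑ t, ((1 : Matrix (Fin n → Fin 2) (Fin n → Fin 2) ℂ) + ∑ a ∈ S t, PauliString n a)) *ᵥ v) := by
    rw [qform_sum]
    exact Finset.sum_nonneg fun t _ => (hpsd t).dotProduct_mulVec_nonneg v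
  -- the partition identity
  have hdisj : ∀ t₁ ∈ (Finset.univ : Finset (Fin (2 ^ n + 1))), ∀ t₂ ∈ Finset.univ,
      t₁ ≠ t₂ → Disjoint (S t₁) (S t₂) := by
    intro t₁ _ t₂ _ hne
    rw [Finset.disjoint_left]
    intro a ha1 ha2
    have hane : a ≠ (fun _ => 0) := by
      rintro rfl; exact h0 t₁ ha1
    obtain ⟨t, _, huniq'⟩ := huniq a hane
    exact hne ((huniq' t₁ ha1).trans (huniq' t₂ ha2).symm)
  have hbiU : (Finset.univ : Finset (Fin (2 ^ n + 1))).biUnion S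
      = Finset.univ.erase (fun _ => (0 : Fin 4)) := by
    ext a
    simp only [Finset.mem_biUnion, Finset.mem_univ, true_and, Finset.mem_erase, and_true]
    constructor
    · rintro ⟨t, ht⟩
      rintro rfl; exact h0 t ht
    · intro ha
      obtain ⟨t, ht, -⟩ := huniq a ha
      exact ⟨t, ht⟩
  have hpart : ∑ t, ∑ a ∈ S t, PauliString n a
      = ∑ a ∈ Finset.univ.erase (fun _ => (0 : Fin 4)), PauliString n a := by
    rw [← hbiU, Finset.sum_biUnion hdisj]
  have hTsum : (∑ t, ((1 : Matrix (Fin n → Fin 2) (Fin n → Fin 2) ℂ) + ∑ a ∈ S t, PauliString n a))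
      = ((2 ^ n : ℕ) : ℂ) • (1 : Matrix (Fin n → Fin 2) (Fin n → Fin 2) ℂ)
        + ∑ a : Fin n → Fin 4, PauliString n a := by
    rw [Finset.sum_add_distrib, Finset.sum_const, Finset.card_univ, Fintype.card_fin, hpart,
      ← Finset.add_sum_erase _ _ (Finset.mem_univ (fun _ => (0 : Fin 4))), pauliString_zero,
      succ_nsmul, Nat.cast_smul_eq_nsmul]
    abel
  -- entrywise form of the full Pauli sum
  have hM : (∑ a : Fin n → Fin 4, PauliString n a)
      = Matrix.of fun i j : Fin n → Fin 2 => ∏ k, (∑ c : Fin 4, pauli c) (i k) (j k) := by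
    ext i j
    rw [Matrix.sum_apply, Matrix.of_apply]
    have := prod_sum_swap (fun k (c : Fin 4) => pauli c (i k) (j k))
    simp only [PauliString, Matrix.of_apply]
    rw [this]
    exact Finset.prod_congr rfl fun k _ => by rw [Matrix.sum_apply]
  -- compute the quadratic form
  have hprodite : ∀ am ap : ℂ, (∏ k : Fin n, (if k = 0 then am else ap)) = am * ap ^ (n - 1) := by
    intro am ap
    rw [← Finset.mul_prod_erase Finset.univ _ (Finset.mem_univ (0 : Fin n)), if_pos rfl]
    congr 1
    rw [Finset.prod_congr rfl (fun k hk => if_neg (Finset.ne_of_mem_erase hk)),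
      Finset.prod_const, Finset.card_erase_of_mem (Finset.mem_univ _), Finset.card_univ,
      Fintype.card_fin]
  have hdotv : star v ⬝ᵥ v = ((6 + 2 * s : ℝ) : ℂ) * ((6 - 2 * s : ℝ) : ℂ) ^ (n - 1) := by
    rw [hv, tensor_dot]
    rw [← hprodite]
    refine Finset.prod_congr rfl fun k _ => ?_
    by_cases hk : k = 0
    · simp [hu, hk, hdm]
    · simp [hu, hk, hdp]
  have hqformv : star v ⬝ᵥ ((∑ a : Fin n → Fin 4, PauliString n a) *ᵥ v)
      = ((-(4 * s) : ℝ) : ℂ) * ((4 * s : ℝ) : ℂ) ^ (n - 1) := by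
    rw [hM, hv, tensor_qform]
    rw [← hprodite]
    refine Finset.prod_congr rfl fun k _ => ?_
    by_cases hk : k = 0
    · simp only [hu, hk, ↓reduceIte, hqm]
    · simp only [hu, hk, ↓reduceIte, hqp]
  -- put it together
  rw [hTsum, Matrix.add_mulVec, Matrix.smul_mulVec, Matrix.one_mulVec,
    dotProduct_add, dotProduct_smul, hdotv, hqformv, smul_eq_mul] at hge
  have hreal : ((2 ^ n : ℕ) : ℂ) * (((6 + 2 * s : ℝ) : ℂ) * ((6 - 2 * s : ℝ) : ℂ) ^ (n - 1))
      + ((-(4 * s) : ℝ) : ℂ) * ((4 * s : ℝ) : ℂ) ^ (n - 1)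
      = (((2 ^ n : ℝ) * ((6 + 2 * s) * (6 - 2 * s) ^ (n - 1))
          + (-(4 * s)) * (4 * s) ^ (n - 1) : ℝ) : ℂ) := by
    push_cast
    ring
  rw [hreal, Complex.zero_le_real] at hge
  -- final contradiction
  obtain ⟨m, rfl⟩ : ∃ m, n = 5 + m := ⟨n - 5, by omega⟩
  have hn1 : 5 + m - 1 = 4 + m := by omega
  rw [hn1] at hge
  have hkey := key_ineq m
  have hexp : (2 : ℝ) ^ (5 + m) * ((6 + 2 * s) * (6 - 2 * s) ^ (4 + m))
      = (12 + 4 * s) * (12 - 4 * s) ^ (4 + m) := by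
    have h2 : (12 - 4 * s : ℝ) = 2 * (6 - 2 * s) := by ring
    rw [h2, mul_pow, pow_add, pow_add]
    ring
  have hexp2 : ((4 * s) : ℝ) * (4 * s) ^ (4 + m) = (4 * s) ^ (5 + m) := by
    rw [pow_add, pow_add]; ring
  nlinarith [hge, hkey, hexp, hexp2]
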